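/- Explicit separable solution of a degenerate one-dimensional parabolic equation: Let p > 2 and C₀ > 0. Define α(t) = (1 + C₀t)^{−1/(p−2)}, u(x,t) = α(t)·(1 − |x|^{p/(p−1)}) for x ∈ ℝ and t > −1/C₀, and a(x,t) = ((p−1)^p / ((p−2)·p^{p−1}))·C₀·(1 − |x|^{p/(p−1)}). Then for every x ≠ 0 and t > −1/C₀, the function u is differentiable in t and twice differentiable in x at (x,t), and ∂_t u(x,t) − a(x,t)·|∂_x u(x,t)|^{p−2}·∂²_x u(x,t) = 0. -/

import Mathlib

open MeasureTheory Metric Set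

noncomputable section

abbrev En (n : ℕ) := EuclideanSpace ℝ (Fin n)

def pucciMinus (lam Lam : ℝ) {n : ℕ} (M : Matrix (Fin n) (Fin n) ℝ) : ℝ :=
  if h : M.IsHermitian then
    ∑ i, (lam * max (h.eigenvalues i) 0 + Lam * min (h.eigenvalues i) 0)
  else 0

def pucciPlus (lam Lam : ℝ) {n : ℕ} (M : Matrix (Fin n) (Fin n) ℝ) : ℝ :=
  if h : M.IsHermitian then
    ∑ i, (Lam * max (h.eigenvalues i) 0 + lam * min (h.eigenvalues i) 0)
  else 0

def timeDeriv {n : ℕ} (φ : En n → ℝ → ℝ) (x : En n) (t : ℝ) : ℝ :=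
  deriv (fun s => φ x s) t

def spatialGrad {n : ℕ} (φ : En n → ℝ → ℝ) (x : En n) (t : ℝ) : En n :=
  gradient (fun y => φ y t) x

def spatialHess {n : ℕ} (φ : En n → ℝ → ℝ) (x : En n) (t : ℝ) :
    Matrix (Fin n) (Fin n) ℝ :=
  Matrix.of fun i j =>
    fderiv ℝ (fun y => fderiv ℝ (fun z => φ z t) y (EuclideanSpace.single j 1)) x
      (EuclideanSpace.single i 1)

/-- `φ` touches `u` from below at `(x₀,t₀)` within `U × (T₁,T₂]`. -/
def TouchesBelow {n : ℕ} (U : Set (En n)) (T₁ T₂ : ℝ) (u φ : En n → ℝ → ℝ)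
    (x₀ : En n) (t₀ : ℝ) : Prop :=
  (∀ x ∈ U, ∀ t ∈ Set.Ioc T₁ T₂, t ≤ t₀ → φ x t ≤ u x t) ∧ φ x₀ t₀ = u x₀ t₀

def TouchesAbove {n : ℕ} (U : Set (En n)) (T₁ T₂ : ℝ) (u φ : En n → ℝ → ℝ)
    (x₀ : En n) (t₀ : ℝ) : Prop :=
  (∀ x ∈ U, ∀ t ∈ Set.Ioc T₁ T₂, t ≤ t₀ → u x t ≤ φ x t) ∧ φ x₀ t₀ = u x₀ t₀

/-- viscosity supersolution of `∂ₜu - |Du|^(p-2) P⁻(D²u) ≥ 0` on `U × (T₁,T₂]`. -/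
def IsViscositySupersolution {n : ℕ} (p lam Lam : ℝ) (U : Set (En n)) (T₁ T₂ : ℝ)
    (u : En n → ℝ → ℝ) : Prop :=
  ∀ φ : En n → ℝ → ℝ, ContDiff ℝ 2 (fun q : En n × ℝ => φ q.1 q.2) →
    ∀ x₀ ∈ U, ∀ t₀ ∈ Set.Ioc T₁ T₂, TouchesBelow U T₁ T₂ u φ x₀ t₀ →
      0 ≤ timeDeriv φ x₀ t₀ -
        ‖spatialGrad φ x₀ t₀‖ ^ (p - 2) * pucciMinus lam Lam (spatialHess φ x₀ t₀)

/-- viscosity subsolution of `∂ₜu - |Du|^(p-2) P⁺(D²u) ≤ 0` on `U × (T₁,T₂]`. -/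
def IsViscositySubsolution {n : ℕ} (p lam Lam : ℝ) (U : Set (En n)) (T₁ T₂ : ℝ)
    (u : En n → ℝ → ℝ) : Prop :=
  ∀ φ : En n → ℝ → ℝ, ContDiff ℝ 2 (fun q : En n × ℝ => φ q.1 q.2) →
    ∀ x₀ ∈ U, ∀ t₀ ∈ Set.Ioc T₁ T₂, TouchesAbove U T₁ T₂ u φ x₀ t₀ →
      timeDeriv φ x₀ t₀ -
        ‖spatialGrad φ x₀ t₀‖ ^ (p - 2) * pucciPlus lam Lam (spatialHess φ x₀ t₀) ≤ 0

open Filter in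
lemma aux_A (r : ℝ) {y : ℝ} (hy : y ≠ 0) :
    HasDerivAt (fun z : ℝ => |z| ^ r * z) ((r + 1) * |y| ^ r) y := by
  rcases hy.lt_or_gt with h | h
  · have hny : (0:ℝ) < -y := by linarith
    have h0 : HasDerivAt (fun w : ℝ => w ^ r) (r * (-y) ^ (r - 1)) (-y) :=
      Real.hasDerivAt_rpow_const (Or.inl hny.ne')
    have h1 : HasDerivAt (fun z : ℝ => (-z) ^ r) (-(r * (-y) ^ (r - 1))) y := by
      simpa [Function.comp_def] using h0.comp y (hasDerivAt_neg y)
    have h2 : HasDerivAt (fun z : ℝ => (-z) ^ r * z)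
        (-(r * (-y) ^ (r - 1)) * y + (-y) ^ r * 1) y := h1.mul (hasDerivAt_id y)
    have heq : (fun z : ℝ => |z| ^ r * z) =ᶠ[nhds y] fun z => (-z) ^ r * z := by
      filter_upwards [eventually_lt_nhds h] with z hz
      rw [abs_of_neg hz]
    have hval : -(r * (-y) ^ (r - 1)) * y + (-y) ^ r * 1 = (r + 1) * |y| ^ r := by
      rw [abs_of_neg h]
      have h3 : (-y) ^ (r - 1) * (-y) = (-y) ^ r := by
        rw [← Real.rpow_add_one hny.ne']; ring_nf
      linear_combination r * h3
    rw [← hval]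
    exact h2.congr_of_eventuallyEq heq
  · have h0 : HasDerivAt (fun w : ℝ => w ^ (r + 1)) ((r + 1) * y ^ (r + 1 - 1)) y :=
      Real.hasDerivAt_rpow_const (Or.inl h.ne')
    have heq : (fun z : ℝ => |z| ^ r * z) =ᶠ[nhds y] fun z => z ^ (r + 1) := by
      filter_upwards [eventually_gt_nhds h] with z hz
      rw [abs_of_pos hz, Real.rpow_add_one hz.ne']
    have hval : (r + 1) * y ^ (r + 1 - 1) = (r + 1) * |y| ^ r := by
      rw [abs_of_pos h]; ring_nf
    rw [← hval]
    exact h0.congr_of_eventuallyEq heq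

open Filter in
lemma aux_B (r : ℝ) {y : ℝ} (hy : y ≠ 0) :
    HasDerivAt (fun z : ℝ => |z| ^ r) (r * |y| ^ (r - 2) * y) y := by
  rcases hy.lt_or_gt with h | h
  · have hny : (0:ℝ) < -y := by linarith
    have h0 : HasDerivAt (fun w : ℝ => w ^ r) (r * (-y) ^ (r - 1)) (-y) :=
      Real.hasDerivAt_rpow_const (Or.inl hny.ne')
    have h1 : HasDerivAt (fun z : ℝ => (-z) ^ r) (-(r * (-y) ^ (r - 1))) y := by
      simpa [Function.comp_def] using h0.comp y (hasDerivAt_neg y)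
    have heq : (fun z : ℝ => |z| ^ r) =ᶠ[nhds y] fun z => (-z) ^ r := by
      filter_upwards [eventually_lt_nhds h] with z hz
      rw [abs_of_neg hz]
    have hval : -(r * (-y) ^ (r - 1)) = r * |y| ^ (r - 2) * y := by
      rw [abs_of_neg h]
      have h3 : (-y) ^ (r - 2) * (-y) = (-y) ^ (r - 1) := by
        rw [← Real.rpow_add_one hny.ne']; ring_nf
      linear_combination r * h3
    rw [← hval]
    exact h1.congr_of_eventuallyEq heq
  · have h0 : HasDerivAt (fun w : ℝ => w ^ r) (r * y ^ (r - 1)) y :=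
      Real.hasDerivAt_rpow_const (Or.inl h.ne')
    have heq : (fun z : ℝ => |z| ^ r) =ᶠ[nhds y] fun z => z ^ r := by
      filter_upwards [eventually_gt_nhds h] with z hz
      rw [abs_of_pos hz]
    have hval : r * y ^ (r - 1) = r * |y| ^ (r - 2) * y := by
      rw [abs_of_pos h]
      have h3 : y ^ (r - 2) * y = y ^ (r - 1) := by
        rw [← Real.rpow_add_one h.ne']; ring_nf
      linear_combination (-r) * h3
    rw [← hval]
    exact h0.congr_of_eventuallyEq heq

/-- explicit separable solution of a degenerate 1-D parabolic equation. -/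
theorem explicit_separable_solution (p C₀ : ℝ) (hp : 2 < p) (hC₀ : 0 < C₀)
    (u a : ℝ → ℝ → ℝ)
    (hu : u = fun x t => (1 + C₀ * t) ^ (-(1 / (p - 2))) * (1 - |x| ^ (p / (p - 1))))
    (ha : a = fun x t =>
      ((p - 1) ^ p / ((p - 2) * p ^ (p - 1))) * C₀ * (1 - |x| ^ (p / (p - 1)))) :
    ∀ x : ℝ, x ≠ 0 → ∀ t : ℝ, -1 / C₀ < t →
      DifferentiableAt ℝ (fun s => u x s) t ∧
      DifferentiableAt ℝ (fun y => u y t) x ∧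
      DifferentiableAt ℝ (fun y => deriv (fun z => u z t) y) x ∧
      deriv (fun s => u x s) t -
          a x t * |deriv (fun y => u y t) x| ^ (p - 2) *
            deriv (fun y => deriv (fun z => u z t) y) x = 0 := by
  intro x hx t ht
  have hp2 : (0:ℝ) < p - 2 := by linarith
  have hp1 : (0:ℝ) < p - 1 := by linarith
  have hp0 : (0:ℝ) < p := by linarith
  have hxpos : (0:ℝ) < |x| := abs_pos.mpr hx
  have hq0 : (0:ℝ) < p / (p - 1) := by positivity
  have hA : (0:ℝ) < 1 + C₀ * t := by
    have h1 : (-1 : ℝ) < t * C₀ := (div_lt_iff₀ hC₀).mp ht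
    nlinarith
  have hc : (0:ℝ) < (1 + C₀ * t) ^ (-(1 / (p - 2))) :=
    Real.rpow_pos_of_pos hA _
  -- time derivative
  have htime : HasDerivAt (fun s => u x s)
      (-(1 / (p - 2)) * (1 + C₀ * t) ^ (-(1 / (p - 2)) - 1) * C₀
        * (1 - |x| ^ (p / (p - 1)))) t := by
    simp only [hu]
    have h0 : HasDerivAt (fun s : ℝ => 1 + C₀ * s) C₀ t := by
      simpa using ((hasDerivAt_id t).const_mul C₀).const_add 1
    have h1 : HasDerivAt (fun s : ℝ => (1 + C₀ * s) ^ (-(1 / (p - 2))))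
        (-(1 / (p - 2)) * (1 + C₀ * t) ^ (-(1 / (p - 2)) - 1) * C₀) t := by
      have h2 := (Real.hasDerivAt_rpow_const (x := 1 + C₀ * t)
        (p := -(1 / (p - 2))) (Or.inl hA.ne')).comp t h0
      simpa [Function.comp_def, mul_comm, mul_assoc] using h2
    exact h1.mul_const _
  -- first spatial derivative at any nonzero point
  have hsp : ∀ y : ℝ, y ≠ 0 → HasDerivAt (fun z => u z t)
      (-((1 + C₀ * t) ^ (-(1 / (p - 2))) * (p / (p - 1)))
        * (|y| ^ (p / (p - 1) - 2) * y)) y := by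
    intro y hy
    simp only [hu]
    have hB := aux_B (p / (p - 1)) hy
    have h1 := ((hasDerivAt_const y (1:ℝ)).sub hB).const_mul
      ((1 + C₀ * t) ^ (-(1 / (p - 2))))
    convert h1 using 1
    all_goals first | rfl | ring
  have hd1 : deriv (fun y => u y t) x
      = -((1 + C₀ * t) ^ (-(1 / (p - 2))) * (p / (p - 1)))
        * (|x| ^ (p / (p - 1) - 2) * x) := (hsp x hx).deriv
  -- second spatial derivative
  have hev : (fun y => deriv (fun z => u z t) y) =ᶠ[nhds x]
      (fun y => -((1 + C₀ * t) ^ (-(1 / (p - 2))) * (p / (p - 1)))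
        * (|y| ^ (p / (p - 1) - 2) * y)) := by
    filter_upwards [eventually_ne_nhds hx] with y hy
    exact (hsp y hy).deriv
  have hsecond : HasDerivAt (fun y => deriv (fun z => u z t) y)
      (-((1 + C₀ * t) ^ (-(1 / (p - 2))) * (p / (p - 1)))
        * ((p / (p - 1) - 2 + 1) * |x| ^ (p / (p - 1) - 2))) x := by
    have hD2 := (aux_A (p / (p - 1) - 2) hx).const_mul
      (-((1 + C₀ * t) ^ (-(1 / (p - 2))) * (p / (p - 1))))
    exact hD2.congr_of_eventuallyEq hev
  refine ⟨htime.differentiableAt, (hsp x hx).differentiableAt,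
    hsecond.differentiableAt, ?_⟩
  rw [htime.deriv, hd1, hsecond.deriv]
  simp only [ha]
  -- rewrite the absolute value
  have habs : |(-((1 + C₀ * t) ^ (-(1 / (p - 2))) * (p / (p - 1)))
        * (|x| ^ (p / (p - 1) - 2) * x))|
      = (1 + C₀ * t) ^ (-(1 / (p - 2))) * (p / (p - 1))
        * |x| ^ (p / (p - 1) - 1) := by
    rw [abs_mul, abs_neg, abs_mul, abs_mul,
      abs_of_pos hc, abs_of_pos hq0,
      abs_of_nonneg (Real.rpow_nonneg (abs_nonneg x) _),
      ← Real.rpow_add_one (abs_ne_zero.mpr hx)]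
    ring_nf
  rw [habs]
  -- expand the power of the product
  have hpow : ((1 + C₀ * t) ^ (-(1 / (p - 2))) * (p / (p - 1))
        * |x| ^ (p / (p - 1) - 1)) ^ (p - 2)
      = ((1 + C₀ * t) ^ (-(1 / (p - 2)))) ^ (p - 2) * ((p / (p - 1)) ^ (p - 2)
        * |x| ^ ((p / (p - 1) - 1) * (p - 2))) := by
    rw [Real.mul_rpow (by positivity) (by positivity),
      Real.mul_rpow (by positivity) (by positivity),
      ← Real.rpow_mul (abs_nonneg x)]
    ring
  rw [hpow]
  -- key scalar identities
  have hxs : |x| ^ ((p / (p - 1) - 1) * (p - 2)) * |x| ^ (p / (p - 1) - 2) = 1 := by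
    rw [← Real.rpow_add hxpos,
      show (p / (p - 1) - 1) * (p - 2) + (p / (p - 1) - 2) = 0 by
        field_simp; ring,
      Real.rpow_zero]
  have hcc : ((1 + C₀ * t) ^ (-(1 / (p - 2)))) ^ (p - 2)
      * (1 + C₀ * t) ^ (-(1 / (p - 2)))
      = (1 + C₀ * t) ^ (-(1 / (p - 2)) - 1) := by
    rw [← Real.rpow_mul hA.le, ← Real.rpow_add hA]
    congr 1
    field_simp
    ring
  have hq2 : (p / (p - 1)) ^ (p - 2) * (p / (p - 1)) = (p / (p - 1)) ^ (p - 1) := by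
    rw [← Real.rpow_add_one hq0.ne']
    ring_nf
  have hPQ : (((1 + C₀ * t) ^ (-(1 / (p - 2)))) ^ (p - 2) * ((p / (p - 1)) ^ (p - 2)
        * |x| ^ ((p / (p - 1) - 1) * (p - 2))))
      * (((1 + C₀ * t) ^ (-(1 / (p - 2))) * (p / (p - 1)))
        * ((p / (p - 1) - 2 + 1) * |x| ^ (p / (p - 1) - 2)))
      = (p / (p - 1)) ^ (p - 1) * (p / (p - 1) - 1)
        * (1 + C₀ * t) ^ (-(1 / (p - 2)) - 1) := by
    calc _ = ((p / (p - 1)) ^ (p - 2) * (p / (p - 1))) * (p / (p - 1) - 2 + 1)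
          * ((((1 + C₀ * t) ^ (-(1 / (p - 2)))) ^ (p - 2)
              * (1 + C₀ * t) ^ (-(1 / (p - 2))))
            * (|x| ^ ((p / (p - 1) - 1) * (p - 2)) * |x| ^ (p / (p - 1) - 2))) := by
          ring
    _ = _ := by rw [hq2, hxs, hcc]; ring
  have hkey : -(1 / (p - 2)) + ((p - 1) ^ p / ((p - 2) * p ^ (p - 1)))
      * ((p / (p - 1)) ^ (p - 1) * (p / (p - 1) - 1)) = 0 := by
    have hqq : (p / (p - 1)) ^ (p - 1) = p ^ (p - 1) / (p - 1) ^ (p - 1) :=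
      Real.div_rpow hp0.le hp1.le _
    have hpp : (p - 1) ^ p = (p - 1) ^ (p - 1) * (p - 1) := by
      have h := Real.rpow_add_one hp1.ne' (p - 1)
      rw [show p - 1 + 1 = p by ring] at h
      exact h
    rw [hqq, hpp]
    have hne1 : (p:ℝ) ^ (p - 1) ≠ 0 := (Real.rpow_pos_of_pos hp0 _).ne'
    have hne2 : ((p:ℝ) - 1) ^ (p - 1) ≠ 0 := (Real.rpow_pos_of_pos hp1 _).ne'
    field_simp
    ring
  linear_combination
    (((p - 1) ^ p / ((p - 2) * p ^ (p - 1))) * C₀ * (1 - |x| ^ (p / (p - 1)))) * hPQ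
    + ((1 + C₀ * t) ^ (-(1 / (p - 2)) - 1) * C₀ * (1 - |x| ^ (p / (p - 1)))) * hkey
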